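/- Let X be a κ-c.c. topological space, let ⟨V_ζ : ζ < κ⟩ be a decreasing sequence of open subsets of X, and suppose Z ⊆ X satisfies ⋂_{ζ<κ} V_ζ ∩ Z = ∅, with cl(V_ζ) = cl(V_0) for all ζ < κ, and V_0 ∩ Z dense in V_0. Then V_0 is κ-weakly-resolvable: the sets T_0 = V_0 \ Z and T_ζ = ((⋂_{ξ<ζ} V_ξ) \ V_ζ) ∩ Z for 0 < ζ < κ partition V_0, and for each ξ < κ, ⋃_{ξ<ζ} T_ζ ⊇ V_ξ ∩ Z is dense in V_0. -/

import Mathlib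

set_option autoImplicit false

open Cardinal Set

/-- let `X` be `κ`-c.c., `⟨V_ζ : ζ < κ⟩` a decreasing sequence of open
sets with `⋂_{ζ<κ} V_ζ ∩ Z = ∅`, `cl(V_ζ) = cl(V_0)` for all `ζ < κ`, and `V_0 ∩ Z`
dense in `V_0`. Then the sets `T_0 = V_0 \ Z` and
`T_ζ = ((⋂_{ξ<ζ} V_ξ) \ V_ζ) ∩ Z` (for `0 < ζ < κ`) partition `V_0`, and for each
`ξ < κ` the tail `⋃_{ξ<ζ<κ} T_ζ` contains `V_ξ ∩ Z` and is dense in `V_0`; so `V_0` is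
`κ`-weakly-resolvable. -/
theorem kappa_weakly_resolvable_open_piece {X : Type*} [TopologicalSpace X]
    (κ : Cardinal) (hκ : ℵ₀ ≤ κ)
    (hcc : ∀ 𝒞 : Set (Set X), (∀ U ∈ 𝒞, IsOpen U ∧ U.Nonempty) →
      𝒞.PairwiseDisjoint id → #𝒞 < κ)
    (V : Ordinal → Set X) (Z : Set X)
    (hopen : ∀ ζ < κ.ord, IsOpen (V ζ))
    (hdec : ∀ ξ ζ : Ordinal, ξ ≤ ζ → ζ < κ.ord → V ζ ⊆ V ξ)
    (hempty : (⋂ ζ ∈ Set.Iio κ.ord, V ζ) ∩ Z = ∅)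
    (hcl : ∀ ζ < κ.ord, closure (V ζ) = closure (V 0))
    (hZdense : V 0 ⊆ closure (V 0 ∩ Z)) :
    ∃ T : Ordinal → Set X,
      T 0 = V 0 \ Z ∧
      (∀ ζ : Ordinal, 0 < ζ → T ζ = ((⋂ ξ ∈ Set.Iio ζ, V ξ) \ V ζ) ∩ Z) ∧
      (Set.Iio κ.ord).PairwiseDisjoint T ∧
      (⋃ ζ ∈ Set.Iio κ.ord, T ζ) = V 0 ∧
      ∀ ξ < κ.ord,
        V ξ ∩ Z ⊆ (⋃ ζ ∈ Set.Ioo ξ κ.ord, T ζ) ∧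
        V 0 ⊆ closure (⋃ ζ ∈ Set.Ioo ξ κ.ord, T ζ) := by
  classical
  have h0 : (0 : Ordinal) < κ.ord := by
    have := Cardinal.ord_le_ord.mpr hκ
    rw [Cardinal.ord_aleph0] at this
    exact lt_of_lt_of_le Ordinal.omega0_pos this
  refine ⟨fun ζ => if ζ = 0 then V 0 \ Z else ((⋂ ξ ∈ Set.Iio ζ, V ξ) \ V ζ) ∩ Z,
    by simp, ?_, ?_, ?_, ?_⟩
  · intro ζ hζ; simp [hζ.ne']
  -- key lemma: every point of `V ξ ∩ Z` lies in some `T ζ` with `ξ < ζ < κ.ord`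
  all_goals
    have key : ∀ x ∈ Z, ∀ ξ, ξ < κ.ord → x ∈ V ξ →
        ∃ ζ, ξ < ζ ∧ ζ < κ.ord ∧
          x ∈ (if ζ = 0 then V 0 \ Z else ((⋂ η ∈ Set.Iio ζ, V η) \ V ζ) ∩ Z) := by
      intro x hxZ ξ hξ hxV
      have hex : ∃ ζ, ζ < κ.ord ∧ x ∉ V ζ := by
        by_contra h
        push_neg at h
        have hx : x ∈ (⋂ ζ ∈ Set.Iio κ.ord, V ζ) ∩ Z :=
          ⟨by simpa [mem_iInter] using h, hxZ⟩
        rw [hempty] at hx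
        exact hx
      set S : Set Ordinal := {ζ | ζ < κ.ord ∧ x ∉ V ζ} with hS
      have hSne : S.Nonempty := hex
      set ζ₀ := Ordinal.lt_wf.min S hSne with hζ₀def
      have hζ₀ : ζ₀ ∈ S := Ordinal.lt_wf.min_mem S hSne
      have hmin : ∀ η, η < ζ₀ → η ∉ S := fun η hη hηS =>
        Ordinal.lt_wf.not_lt_min S hηS hη
      have hξζ₀ : ξ < ζ₀ := by
        by_contra h
        push_neg at h
        exact hζ₀.2 (hdec ζ₀ ξ h hξ hxV)
      refine ⟨ζ₀, hξζ₀, hζ₀.1, ?_⟩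
      have hζ₀ne : ζ₀ ≠ 0 := (lt_of_le_of_lt (zero_le (a := ξ)) hξζ₀).ne'
      rw [if_neg hζ₀ne]
      refine ⟨⟨?_, hζ₀.2⟩, hxZ⟩
      simp only [mem_iInter]
      intro η hη
      by_contra hxη
      exact hmin η hη ⟨hη.trans hζ₀.1, hxη⟩
  -- pairwise disjointness
  · have main : ∀ a b : Ordinal, a < b →
        Disjoint (if a = 0 then V 0 \ Z else ((⋂ ξ ∈ Set.Iio a, V ξ) \ V a) ∩ Z)
          (if b = 0 then V 0 \ Z else ((⋂ ξ ∈ Set.Iio b, V ξ) \ V b) ∩ Z) := by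
      intro a b h
      have hbne : b ≠ 0 := (lt_of_le_of_lt (zero_le (a := a)) h).ne'
      intro s hsa hsb x hxs
      have hxa := hsa hxs
      have hxb := hsb hxs
      simp only [id, if_neg hbne] at hxb
      by_cases ha0 : a = 0
      · simp only [id, ha0, if_pos rfl] at hxa
        exact hxa.2 hxb.2
      · simp only [id, if_neg ha0] at hxa
        have : x ∈ V a := by
          have := hxb.1.1
          simp only [mem_iInter] at this
          exact this a h
        exact hxa.1.2 this
    intro a _ b _ hab
    rcases hab.lt_or_gt with h | h
    · exact main a b h
    · exact (main b a h).symm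
  -- union equals V 0
  · ext x
    simp only [mem_iUnion, exists_prop]
    constructor
    · rintro ⟨ζ, hζ, hx⟩
      by_cases hζ0 : ζ = 0
      · rw [if_pos hζ0] at hx; exact hx.1
      · rw [if_neg hζ0] at hx
        have := hx.1.1
        simp only [mem_iInter] at this
        exact this 0 (pos_iff_ne_zero.mpr hζ0)
    · intro hx
      by_cases hxZ : x ∈ Z
      · obtain ⟨ζ, _, hζκ, hxT⟩ := key x hxZ 0 h0 hx
        exact ⟨ζ, hζκ, hxT⟩
      · exact ⟨0, h0, by rw [if_pos rfl]; exact ⟨hx, hxZ⟩⟩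
  -- tails
  · intro ξ hξ
    have hsub : V ξ ∩ Z ⊆ ⋃ ζ ∈ Set.Ioo ξ κ.ord,
        (if ζ = 0 then V 0 \ Z else ((⋂ η ∈ Set.Iio ζ, V η) \ V ζ) ∩ Z) := by
      rintro x ⟨hxV, hxZ⟩
      obtain ⟨ζ, hξζ, hζκ, hxT⟩ := key x hxZ ξ hξ hxV
      exact mem_iUnion₂.mpr ⟨ζ, ⟨hξζ, hζκ⟩, hxT⟩
    refine ⟨hsub, ?_⟩
    -- V ξ ∩ Z is dense in V 0
    have hdense : V 0 ⊆ closure (V ξ ∩ Z) := by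
      intro x hx
      rw [mem_closure_iff]
      intro U hU hxU
      have hx1 : x ∈ closure (V ξ) := (hcl ξ hξ) ▸ subset_closure hx
      obtain ⟨y, hyU, hyV⟩ := (mem_closure_iff.mp hx1) U hU hxU
      have hy0 : y ∈ closure (V 0) := (hcl ξ hξ) ▸ subset_closure hyV
      obtain ⟨z, hz, hzV0⟩ := (mem_closure_iff.mp hy0) (U ∩ V ξ)
        (hU.inter (hopen ξ hξ)) ⟨hyU, hyV⟩
      have hz1 : z ∈ closure (V 0 ∩ Z) := hZdense hzV0
      obtain ⟨w, hw, hwVZ⟩ := (mem_closure_iff.mp hz1) (U ∩ V ξ)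
        (hU.inter (hopen ξ hξ)) hz
      exact ⟨w, hw.1, hw.2, hwVZ.2⟩
    exact fun x hx => closure_mono hsub (hdense hx)
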